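/- The language Rep(G(L)) of words representing traces in the minimal generating set G(L) of the left Lazard factor L is regular. -/

import Mathlib

open Pointwise


/-- The relation `ab ~ ba` for commuting pairs `(a,b) ∈ θ`. -/
def traceRel {α : Type} (θ : α → α → Prop) : FreeMonoid α → FreeMonoid α → Prop :=
  fun u v => ∃ a b, θ a b ∧ u = FreeMonoid.of a * FreeMonoid.of b ∧
    v = FreeMonoid.of b * FreeMonoid.of a

/-- The trace congruence generated by `ab ~ ba` for `(a,b) ∈ θ`. -/
def traceCon {α : Type} (θ : α → α → Prop) : Con (FreeMonoid α) := conGen (traceRel θ)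

/-- The trace monoid `M(Σ,θ)`. -/
abbrev TraceMonoid {α : Type} (θ : α → α → Prop) := (traceCon θ).Quotient

/-- The canonical surjection `φ : Σ* → M(Σ,θ)`. -/
def phi {α : Type} (θ : α → α → Prop) : FreeMonoid α →* TraceMonoid θ := (traceCon θ).mk'

/-- The terminal alphabet of a trace. -/
def TA {α : Type} (θ : α → α → Prop) (t : TraceMonoid θ) : Set α :=
  {x | ∃ u : TraceMonoid θ, t = u * phi θ (FreeMonoid.of x)}

/-- The left Lazard factor: traces whose terminal alphabet avoids `B`. -/
def leftFactor {α : Type} (θ : α → α → Prop) (B : Set α) : Set (TraceMonoid θ) :=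
  {t | TA θ t ∩ B = ∅}

/-- The submonoid of `M(Σ,θ)` generated by the letters of `B`,
identified with `M(B,θ_B)`. -/
def subTrace {α : Type} (θ : α → α → Prop) (B : Set α) : Submonoid (TraceMonoid θ) :=
  Submonoid.closure ((fun x => phi θ (FreeMonoid.of x)) '' B)

namespace RepAux
variable {α : Type}
@[ext] structure MZ (θ : α → α → Prop) : Type where
  A : Set α
  T : Set α
variable {θ : α → α → Prop}
instance : Mul (MZ θ) := ⟨fun m n => ⟨m.A ∪ n.A, n.T ∪ {x ∈ m.T | ∀ y ∈ n.A, θ x y}⟩⟩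
instance : One (MZ θ) := ⟨⟨∅, ∅⟩⟩
@[simp] lemma MZ.mul_A (m n : MZ θ) : (m * n).A = m.A ∪ n.A := rfl
@[simp] lemma MZ.mul_T (m n : MZ θ) :
    (m * n).T = n.T ∪ {x ∈ m.T | ∀ y ∈ n.A, θ x y} := rfl
@[simp] lemma MZ.one_A : (1 : MZ θ).A = ∅ := rfl
@[simp] lemma MZ.one_T : (1 : MZ θ).T = ∅ := rfl
instance : Monoid (MZ θ) where
  mul_assoc m n p := by
    ext x <;> simp [Set.union_assoc, Set.mem_union, or_imp, forall_and] <;> tauto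
  one_mul m := by ext x <;> simp
  mul_one m := by ext x <;> simp
@[ext] structure KK (θ : α → α → Prop) : Type where
  r : MZ θ
  b : MZ θ
  ok : Prop
instance : Mul (KK θ) :=
  ⟨fun k l => ⟨k.r * l.r, k.b * l.b, k.ok ∧ l.ok ∧ ∀ x ∈ k.b.A, ∀ y ∈ l.r.A, θ x y⟩⟩
instance : One (KK θ) := ⟨⟨1, 1, True⟩⟩
@[simp] lemma KK.mul_r (k l : KK θ) : (k * l).r = k.r * l.r := rfl
@[simp] lemma KK.mul_b (k l : KK θ) : (k * l).b = k.b * l.b := rfl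
@[simp] lemma KK.mul_ok (k l : KK θ) :
    (k * l).ok = (k.ok ∧ l.ok ∧ ∀ x ∈ k.b.A, ∀ y ∈ l.r.A, θ x y) := rfl
@[simp] lemma KK.one_r : (1 : KK θ).r = 1 := rfl
@[simp] lemma KK.one_b : (1 : KK θ).b = 1 := rfl
@[simp] lemma KK.one_ok : (1 : KK θ).ok = True := rfl
instance : Monoid (KK θ) where
  mul_assoc k l m := by
    refine KK.ext (mul_assoc _ _ _) (mul_assoc _ _ _) ?_
    simp only [KK.mul_ok, KK.mul_r, KK.mul_b, MZ.mul_A, Set.mem_union, or_imp, forall_and,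
      eq_iff_iff]
    tauto
  one_mul k := by
    refine KK.ext (one_mul _) (one_mul _) ?_
    simp [eq_iff_iff]
  mul_one k := by
    refine KK.ext (mul_one _) (mul_one _) ?_
    simp [eq_iff_iff]

instance [Fintype α] : Fintype (MZ θ) :=
  Fintype.ofEquiv (Set α × Set α)
    ⟨fun p => ⟨p.1, p.2⟩, fun m => (m.A, m.T), fun _ => rfl, fun _ => rfl⟩
instance [Fintype α] : Fintype (KK θ) :=
  Fintype.ofEquiv (MZ θ × MZ θ × Prop)
    ⟨fun p => ⟨p.1, p.2.1, p.2.2⟩, fun k => (k.r, k.b, k.ok), fun _ => rfl, fun _ => rfl⟩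

/-- image of a letter in `MZ`. -/
def fl (θ : α → α → Prop) (a : α) : MZ θ := ⟨{a}, {a}⟩
@[simp] lemma fl_A (a : α) : (fl θ a).A = {a} := rfl
@[simp] lemma fl_T (a : α) : (fl θ a).T = {a} := rfl

def Hgen (θ : α → α → Prop) (a : α) : MZ θ × Set (KK θ) :=
  (fl θ a, {⟨fl θ a, 1, True⟩, ⟨1, fl θ a, True⟩})

noncomputable def HH (θ : α → α → Prop) : FreeMonoid α →* MZ θ × Set (KK θ) :=
  FreeMonoid.lift (Hgen θ)

@[simp] lemma HH_of (a : α) : HH θ (FreeMonoid.of a) = Hgen θ a := rfl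

lemma phi_eq {u v : FreeMonoid α} : phi θ u = phi θ v ↔ traceCon θ u v := by
  simp only [phi, Con.coe_mk']
  exact Con.eq _

lemma phi_swap {a b : α} (h : θ a b) :
    phi θ (FreeMonoid.of a * FreeMonoid.of b) = phi θ (FreeMonoid.of b * FreeMonoid.of a) :=
  phi_eq.mpr (ConGen.Rel.of _ _ ⟨a, b, h, rfl, rfl⟩)

lemma pair_mul_pair {M : Type*} [Monoid M] (a b c d : M) :
    ({a, b} : Set M) * {c, d} = {a * c, a * d, b * c, b * d} := by
  ext x
  simp only [Set.mem_mul, Set.mem_insert_iff, Set.mem_singleton_iff]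
  constructor
  · rintro ⟨y, (rfl | rfl), z, (rfl | rfl), rfl⟩ <;> tauto
  · rintro (rfl | rfl | rfl | rfl) <;>
      [exact ⟨a, Or.inl rfl, c, Or.inl rfl, rfl⟩;
       exact ⟨a, Or.inl rfl, d, Or.inr rfl, rfl⟩;
       exact ⟨b, Or.inr rfl, c, Or.inl rfl, rfl⟩;
       exact ⟨b, Or.inr rfl, d, Or.inr rfl, rfl⟩]

lemma red_mul_red (m n : MZ θ) : (⟨m, 1, True⟩ : KK θ) * ⟨n, 1, True⟩ = ⟨m * n, 1, True⟩ := by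
  refine KK.ext rfl (one_mul _) ?_; simp [eq_iff_iff]
lemma red_mul_blue (m n : MZ θ) : (⟨m, 1, True⟩ : KK θ) * ⟨1, n, True⟩ = ⟨m, n, True⟩ := by
  refine KK.ext (mul_one _) (one_mul _) ?_; simp [eq_iff_iff]
lemma blue_mul_red (m n : MZ θ) :
    (⟨1, m, True⟩ : KK θ) * ⟨n, 1, True⟩ = ⟨n, m, ∀ x ∈ m.A, ∀ y ∈ n.A, θ x y⟩ := by
  refine KK.ext (one_mul _) (mul_one _) ?_; simp [eq_iff_iff]
lemma blue_mul_blue (m n : MZ θ) : (⟨1, m, True⟩ : KK θ) * ⟨1, n, True⟩ = ⟨1, m * n, True⟩ := by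
  refine KK.ext (one_mul _) rfl ?_; simp [eq_iff_iff]

lemma fl_comm {a b : α} (h : θ a b) (h' : θ b a) : fl θ a * fl θ b = fl θ b * fl θ a := by
  refine MZ.ext (Set.union_comm _ _) ?_
  ext x
  simp only [MZ.mul_T, fl_A, fl_T, Set.mem_union, Set.mem_setOf_eq, Set.mem_singleton_iff,
    forall_eq]
  constructor <;> rintro (rfl | ⟨rfl, -⟩) <;> simp [h, h']

lemma Hgen_comm {a b : α} (h : θ a b) (h' : θ b a) :
    Hgen θ a * Hgen θ b = Hgen θ b * Hgen θ a := by
  have hab : (∀ x ∈ (fl θ a).A, ∀ y ∈ (fl θ b).A, θ x y) = True := by simp [h]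
  have hba : (∀ x ∈ (fl θ b).A, ∀ y ∈ (fl θ a).A, θ x y) = True := by simp [h']
  have e1 : Hgen θ a * Hgen θ b =
      (fl θ a * fl θ b,
        ({⟨fl θ a, 1, True⟩, ⟨1, fl θ a, True⟩} : Set (KK θ)) *
          {⟨fl θ b, 1, True⟩, ⟨1, fl θ b, True⟩}) := rfl
  have e2 : Hgen θ b * Hgen θ a =
      (fl θ b * fl θ a,
        ({⟨fl θ b, 1, True⟩, ⟨1, fl θ b, True⟩} : Set (KK θ)) *
          {⟨fl θ a, 1, True⟩, ⟨1, fl θ a, True⟩}) := rfl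
  have key : Hgen θ a * Hgen θ b =
      (fl θ a * fl θ b,
        {⟨fl θ a * fl θ b, 1, True⟩, ⟨fl θ a, fl θ b, True⟩, ⟨fl θ b, fl θ a, True⟩,
         ⟨1, fl θ a * fl θ b, True⟩}) := by
    rw [e1, pair_mul_pair, red_mul_red, red_mul_blue, blue_mul_red, blue_mul_blue, hab]
  have key' : Hgen θ b * Hgen θ a =
      (fl θ b * fl θ a,
        {⟨fl θ b * fl θ a, 1, True⟩, ⟨fl θ b, fl θ a, True⟩, ⟨fl θ a, fl θ b, True⟩,
         ⟨1, fl θ b * fl θ a, True⟩}) := by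
    rw [e2, pair_mul_pair, red_mul_red, red_mul_blue, blue_mul_red, blue_mul_blue, hba]
  rw [key, key', fl_comm h h']
  refine Prod.ext rfl ?_
  ext k
  simp only [Set.mem_insert_iff, Set.mem_singleton_iff]
  tauto

lemma HH_congr (hsymm : ∀ x y, θ x y → θ y x) {u v : FreeMonoid α}
    (h : phi θ u = phi θ v) : HH θ u = HH θ v := by
  have hc : traceCon θ u v := phi_eq.mp h
  have hle : traceCon θ ≤ Con.ker (HH θ) := by
    refine Con.conGen_le.mpr ?_
    rintro x y ⟨a, b, hab, rfl, rfl⟩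
    rw [Con.ker_rel, map_mul, map_mul, HH_of, HH_of]
    exact Hgen_comm hab (hsymm _ _ hab)
  exact (Con.ker_rel _).mp (hle hc)

lemma HH_mul_of (a : α) (w : FreeMonoid α) :
    HH θ (FreeMonoid.of a * w) = Hgen θ a * HH θ w := by rw [map_mul, HH_of]

lemma of_mul_ne_one (a : α) (w : FreeMonoid α) : FreeMonoid.of a * w ≠ 1 := by
  intro h
  have := congrArg FreeMonoid.toList h
  rw [FreeMonoid.toList_mul, FreeMonoid.toList_of, FreeMonoid.toList_one] at this
  simp at this

lemma A_empty_iff {w : FreeMonoid α} : (HH θ w).1.A = ∅ ↔ w = 1 := by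
  induction w using FreeMonoid.recOn with
  | one => simp [map_one]
  | of_mul a w ihw =>
    constructor
    · intro h
      exfalso
      rw [HH_mul_of] at h
      simp only [Prod.fst_mul, MZ.mul_A, Hgen, fl_A] at h
      have : a ∈ (∅ : Set α) := h ▸ Set.mem_union_left _ rfl
      exact this
    · intro h; exact absurd h (of_mul_ne_one a w)

lemma mem_A_of_mul (a : α) (w : FreeMonoid α) {x : α}
    (hx : x ∈ (HH θ w).1.A) : x ∈ (HH θ (FreeMonoid.of a * w)).1.A := by
  rw [HH_mul_of]
  simp only [Prod.fst_mul, MZ.mul_A, Hgen, fl_A]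
  exact Set.mem_union_right _ hx

lemma self_mem_A_of_mul (a : α) (w : FreeMonoid α) :
    a ∈ (HH θ (FreeMonoid.of a * w)).1.A := by
  rw [HH_mul_of]
  simp only [Prod.fst_mul, MZ.mul_A, Hgen, fl_A]
  exact Set.mem_union_left _ rfl

lemma phi_comm_all {c : α} {w : FreeMonoid α} (h : ∀ x ∈ (HH θ w).1.A, θ c x) :
    phi θ (FreeMonoid.of c * w) = phi θ (w * FreeMonoid.of c) := by
  induction w using FreeMonoid.recOn with
  | one => rw [mul_one, one_mul]
  | of_mul a w ihw =>
    have hca : θ c a := h a (self_mem_A_of_mul a w)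
    have h' : ∀ x ∈ (HH θ w).1.A, θ c x := fun x hx => h x (mem_A_of_mul a w hx)
    calc phi θ (FreeMonoid.of c * (FreeMonoid.of a * w))
        = phi θ (FreeMonoid.of c * FreeMonoid.of a) * phi θ w := by
          rw [← mul_assoc, map_mul]
      _ = phi θ (FreeMonoid.of a * FreeMonoid.of c) * phi θ w := by rw [phi_swap hca]
      _ = phi θ (FreeMonoid.of a) * phi θ (FreeMonoid.of c * w) := by
          rw [map_mul, map_mul, mul_assoc]
      _ = phi θ (FreeMonoid.of a) * phi θ (w * FreeMonoid.of c) := by rw [ihw h']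
      _ = phi θ (FreeMonoid.of a * w * FreeMonoid.of c) := by
          simp [map_mul, mul_assoc]

lemma mem_T_exists {w : FreeMonoid α} {x : α} (hx : x ∈ (HH θ w).1.T) :
    ∃ u : TraceMonoid θ, phi θ w = u * phi θ (FreeMonoid.of x) := by
  induction w using FreeMonoid.recOn with
  | one => simp [map_one] at hx
  | of_mul a w ihw =>
    rw [HH_mul_of] at hx
    simp only [Prod.fst_mul, MZ.mul_T, Hgen, fl_A, fl_T, Set.mem_union, Set.mem_setOf_eq,
      Set.mem_singleton_iff] at hx
    rcases hx with hx | ⟨rfl, hcomm⟩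
    · obtain ⟨u, hu⟩ := ihw hx
      exact ⟨phi θ (FreeMonoid.of a) * u, by rw [map_mul, hu, mul_assoc]⟩
    · refine ⟨phi θ w, ?_⟩
      rw [← map_mul, phi_comm_all hcomm]

lemma exists_T_mem (hsymm : ∀ x y, θ x y → θ y x) {w : FreeMonoid α} {u : TraceMonoid θ} {x : α}
    (h : phi θ w = u * phi θ (FreeMonoid.of x)) : x ∈ (HH θ w).1.T := by
  obtain ⟨v, rfl⟩ := Con.mk'_surjective u
  have h2 : phi θ w = phi θ (v * FreeMonoid.of x) := by rw [map_mul]; exact h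
  rw [HH_congr hsymm h2, map_mul, HH_of]
  simp only [Prod.fst_mul, MZ.mul_T, Hgen, fl_T, fl_A]
  exact Set.mem_union_left _ rfl

lemma red_mem (w : FreeMonoid α) : (⟨(HH θ w).1, 1, True⟩ : KK θ) ∈ (HH θ w).2 := by
  induction w using FreeMonoid.recOn with
  | one =>
    simp only [map_one, Prod.fst_one, Prod.snd_one, Set.mem_one]
    rfl
  | of_mul a w ihw =>
    rw [HH_mul_of]
    have he : (⟨fl θ a, 1, True⟩ : KK θ) * ⟨(HH θ w).1, 1, True⟩ =
        ⟨(Hgen θ a * HH θ w).1, 1, True⟩ := by rw [red_mul_red]; rfl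
    rw [Prod.snd_mul, ← he]
    exact Set.mul_mem_mul (Set.mem_insert _ _) ihw

lemma blue_mem (w : FreeMonoid α) : (⟨1, (HH θ w).1, True⟩ : KK θ) ∈ (HH θ w).2 := by
  induction w using FreeMonoid.recOn with
  | one =>
    simp only [map_one, Prod.fst_one, Prod.snd_one, Set.mem_one]
    rfl
  | of_mul a w ihw =>
    rw [HH_mul_of]
    have he : (⟨1, fl θ a, True⟩ : KK θ) * ⟨1, (HH θ w).1, True⟩ =
        ⟨1, (Hgen θ a * HH θ w).1, True⟩ := by rw [blue_mul_blue]; rfl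
    rw [Prod.snd_mul, ← he]
    refine Set.mul_mem_mul ?_ ihw
    exact Set.mem_insert_of_mem _ rfl

lemma decompose : ∀ (w : FreeMonoid α) (k : KK θ), k ∈ (HH θ w).2 → k.ok →
    ∃ u v : FreeMonoid α, phi θ w = phi θ u * phi θ v ∧ (HH θ u).1 = k.r ∧ (HH θ v).1 = k.b := by
  intro w
  induction w using FreeMonoid.recOn with
  | one =>
    intro k hk _
    rw [map_one, Prod.snd_one, Set.mem_one] at hk
    subst hk
    exact ⟨1, 1, by simp [map_one], by simp [map_one], by simp [map_one]⟩
  | of_mul c w ihw =>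
    intro k hk hok
    rw [HH_mul_of, Prod.snd_mul] at hk
    obtain ⟨k1, hk1, k2, hk2, rfl⟩ := Set.mem_mul.mp hk
    simp only [KK.mul_ok] at hok
    obtain ⟨u, v, heq, hr, hb⟩ := ihw k2 hk2 hok.2.1
    simp only [Hgen, Set.mem_insert_iff, Set.mem_singleton_iff] at hk1
    rcases hk1 with rfl | rfl
    · refine ⟨FreeMonoid.of c * u, v, ?_, ?_, ?_⟩
      · rw [map_mul, heq, map_mul, mul_assoc]
      · rw [HH_mul_of]
        show fl θ c * (HH θ u).1 = _
        rw [hr]; rfl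
      · rw [hb]
        show k2.b = 1 * k2.b
        rw [one_mul]
    · have hcomm : ∀ x ∈ (HH θ u).1.A, θ c x := by
        intro x hx
        refine hok.2.2 c ?_ x ?_
        · exact rfl
        · rw [← hr] at *; exact hx
      have hcu : phi θ (FreeMonoid.of c) * phi θ u = phi θ u * phi θ (FreeMonoid.of c) := by
        have := phi_comm_all hcomm
        rwa [map_mul, map_mul] at this
      refine ⟨u, FreeMonoid.of c * v, ?_, ?_, ?_⟩
      · rw [map_mul, heq, ← mul_assoc, hcu, mul_assoc, ← map_mul]
      · rw [hr]
        show k2.r = 1 * k2.r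
        rw [one_mul]
      · rw [HH_mul_of]
        show fl θ c * (HH θ v).1 = _
        rw [hb]; rfl

lemma TA_eq (hsymm : ∀ x y, θ x y → θ y x) (w : FreeMonoid α) :
    TA θ (phi θ w) = (HH θ w).1.T := by
  ext x
  constructor
  · rintro ⟨u, hu⟩
    exact exists_T_mem hsymm hu
  · intro hx
    exact mem_T_exists hx

lemma phi_one_iff (hsymm : ∀ x y, θ x y → θ y x) (w : FreeMonoid α) :
    phi θ w = 1 ↔ (HH θ w).1.A = ∅ := by
  constructor
  · intro h
    have h2 : HH θ w = HH θ 1 := HH_congr hsymm (by rw [h, map_one])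
    rw [h2, map_one]
    rfl
  · intro h
    rw [A_empty_iff.mp h, map_one]

noncomputable def dfa (θ : α → α → Prop) (B : Set α) : DFA α (MZ θ × Set (KK θ)) where
  step s a := s * Hgen θ a
  start := 1
  accept := {s | s.1.T ∩ B = ∅ ∧ s.1.A ≠ ∅ ∧
    ¬∃ k ∈ s.2, k.ok ∧ (k.r.T ∩ B = ∅ ∧ k.r.A ≠ ∅) ∧ (k.b.T ∩ B = ∅ ∧ k.b.A ≠ ∅)}

lemma dfa_evalFrom (B : Set α) (l : List α) :
    ∀ s, (dfa θ B).evalFrom s l = s * HH θ (FreeMonoid.ofList l) := by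
  induction l with
  | nil => intro s; simp [FreeMonoid.ofList_nil, map_one, DFA.evalFrom]
  | cons a l ih =>
    intro s
    show (dfa θ B).evalFrom ((dfa θ B).step s a) l = _
    rw [ih, FreeMonoid.ofList_cons, map_mul, HH_of]
    show s * Hgen θ a * _ = _
    rw [mul_assoc]

lemma dfa_eval (B : Set α) (l : List α) :
    (dfa θ B).eval l = HH θ (FreeMonoid.ofList l) := by
  rw [DFA.eval, dfa_evalFrom]
  exact one_mul _

end RepAux

/-- the language `Rep(G(L))` of words representing traces in the
minimal generating set `G(L) = (L \ {1}) \ (L \ {1})²` of the left Lazard factor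
is regular. -/
theorem rep_generating_set_regular {α : Type} [Fintype α] (θ : α → α → Prop)
    (hrefl : ∀ x, θ x x) (hsymm : ∀ x y, θ x y → θ y x) (B : Set α) :
    Language.IsRegular
      {w : List α | phi θ (FreeMonoid.ofList w) ∈
        {t : TraceMonoid θ | t ∈ leftFactor θ B ∧ t ≠ 1 ∧
          ¬∃ a b : TraceMonoid θ, a ∈ leftFactor θ B ∧ b ∈ leftFactor θ B ∧
            a ≠ 1 ∧ b ≠ 1 ∧ a * b = t}} := by
  classical
  refine ⟨RepAux.MZ θ × Set (RepAux.KK θ), inferInstance, RepAux.dfa θ B, ?_⟩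
  ext w
  rw [DFA.mem_accepts, RepAux.dfa_eval]
  change RepAux.HH θ (FreeMonoid.ofList w) ∈ {s : RepAux.MZ θ × Set (RepAux.KK θ) | s.1.T ∩ B = ∅ ∧ s.1.A ≠ ∅ ∧
      ¬∃ k ∈ s.2, k.ok ∧ (k.r.T ∩ B = ∅ ∧ k.r.A ≠ ∅) ∧ (k.b.T ∩ B = ∅ ∧ k.b.A ≠ ∅)} ↔ _
  rw [Set.mem_setOf_eq]
  constructor
  · rintro ⟨h1, h2, h3⟩
    refine ⟨?_, ?_, ?_⟩
    · show TA θ (phi θ (FreeMonoid.ofList w)) ∩ B = ∅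
      rw [RepAux.TA_eq hsymm]
      exact h1
    · intro h
      exact h2 ((RepAux.phi_one_iff hsymm _).mp h)
    · rintro ⟨a, b, haL, hbL, ha1, hb1, hab⟩
      apply h3
      obtain ⟨u, hu⟩ := Con.mk'_surjective a
      obtain ⟨v, hv⟩ := Con.mk'_surjective b
      replace hu : phi θ u = a := hu
      replace hv : phi θ v = b := hv
      have hw : phi θ (FreeMonoid.ofList w) = phi θ (u * v) := by
        rw [map_mul, hu, hv, hab]
      have hHw : RepAux.HH θ (FreeMonoid.ofList w) = RepAux.HH θ u * RepAux.HH θ v :=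
        (RepAux.HH_congr hsymm hw).trans (map_mul _ _ _)
      refine ⟨(⟨(RepAux.HH θ u).1, 1, True⟩ : RepAux.KK θ) * ⟨1, (RepAux.HH θ v).1, True⟩, ?_, ?_⟩
      · rw [hHw, Prod.snd_mul]
        exact Set.mul_mem_mul (RepAux.red_mem u) (RepAux.blue_mem v)
      · rw [RepAux.red_mul_blue]
        refine ⟨trivial, ⟨?_, ?_⟩, ?_, ?_⟩
        · rw [← RepAux.TA_eq hsymm, hu]
          exact haL
        · intro h
          exact ha1 (hu ▸ (RepAux.phi_one_iff hsymm u).mpr h)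
        · rw [← RepAux.TA_eq hsymm, hv]
          exact hbL
        · intro h
          exact hb1 (hv ▸ (RepAux.phi_one_iff hsymm v).mpr h)
  · rintro ⟨h1, h2, h3⟩
    refine ⟨?_, ?_, ?_⟩
    · rw [← RepAux.TA_eq hsymm]
      exact h1
    · intro h
      exact h2 ((RepAux.phi_one_iff hsymm _).mpr h)
    · rintro ⟨k, hk, hok, ⟨hrT, hrA⟩, hbT, hbA⟩
      obtain ⟨u, v, heq, hr, hb⟩ := RepAux.decompose _ k hk hok
      apply h3
      refine ⟨phi θ u, phi θ v, ?_, ?_, ?_, ?_, heq.symm⟩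
      · show TA θ (phi θ u) ∩ B = ∅
        rw [RepAux.TA_eq hsymm, hr]
        exact hrT
      · show TA θ (phi θ v) ∩ B = ∅
        rw [RepAux.TA_eq hsymm, hb]
        exact hbT
      · intro h
        exact hrA (hr ▸ (RepAux.phi_one_iff hsymm u).mp h)
      · intro h
        exact hbA (hb ▸ (RepAux.phi_one_iff hsymm v).mp h)
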